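/- arXiv:1504.07672 — 9 statements merged into one kernel-verified Lean document; each statement's English description precedes it below -/
import Mathlib

section
/- Let P be a symmetric positive semidefinite n×n real matrix and q ∈ ℝⁿ, and f(x) = xᵀPx + 2qᵀx. If q does not lie in the range (column space) of P, then f is unbounded below on the integer lattice ℤⁿ; that is, the set {f(x) : x ∈ ℤⁿ} is not bounded below. -/
open Matrix

private lemma aux_exists_kernel_vec (n : ℕ) (P : Matrix (Fin n) (Fin n) ℝ) (hP : P.PosSemidef)
    (q : Fin n → ℝ) (hq : ¬ ∃ v : Fin n → ℝ, P *ᵥ v = q) :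
    ∃ u : Fin n → ℝ, P *ᵥ u = 0 ∧ q ⬝ᵥ u ≠ 0 := by
  set S : Submodule ℝ (EuclideanSpace ℝ (Fin n)) := LinearMap.range (Matrix.toEuclideanLin P) with hS
  let q' : EuclideanSpace ℝ (Fin n) := WithLp.toLp 2 q
  have hqS : q' ∉ S := fun ⟨v, hv⟩ => hq ⟨v.ofLp, congrArg WithLp.ofLp hv⟩
  set u : EuclideanSpace ℝ (Fin n) := q' - (S.orthogonalProjection q' : EuclideanSpace ℝ (Fin n)) with hu
  have huo : u ∈ Sᗮ := Submodule.sub_starProjection_mem_orthogonal q'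
  have hune : u ≠ 0 := by
    intro h
    apply hqS
    have : q' = (S.orthogonalProjection q' : EuclideanSpace ℝ (Fin n)) := by
      have := sub_eq_zero.mp h; exact this
    rw [this]; exact (S.orthogonalProjection q').2
  have h1 : ∀ v : Fin n → ℝ, (P *ᵥ v) ⬝ᵥ u.ofLp = 0 := by
    intro v
    have := huo (Matrix.toEuclideanLin P (WithLp.toLp 2 v)) ⟨_, rfl⟩
    rw [EuclideanSpace.inner_eq_star_dotProduct, star_trivial, dotProduct_comm] at this
    exact this
  have hsymm : Pᵀ = P := by
    have := hP.1; rwa [Matrix.IsHermitian, conjTranspose_eq_transpose_of_trivial] at this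
  have hPu : P *ᵥ u.ofLp = 0 := by
    have h3 : (P *ᵥ u.ofLp) ⬝ᵥ (P *ᵥ u.ofLp) = 0 := by
      calc (P *ᵥ u.ofLp) ⬝ᵥ (P *ᵥ u.ofLp) = (P *ᵥ (P *ᵥ u.ofLp)) ⬝ᵥ u.ofLp := by
            rw [Matrix.dotProduct_mulVec, ← Matrix.mulVec_transpose, hsymm]
        _ = 0 := h1 _
    exact (dotProduct_self_eq_zero).mp h3
  refine ⟨u.ofLp, hPu, ?_⟩
  have hqu : q ⬝ᵥ u.ofLp = u.ofLp ⬝ᵥ u.ofLp := by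
    have h2 : (S.orthogonalProjection q' : EuclideanSpace ℝ (Fin n)).ofLp ⬝ᵥ u.ofLp = 0 := by
      have := huo ((S.orthogonalProjection q' : EuclideanSpace ℝ (Fin n))) (S.orthogonalProjection q').2
      rw [EuclideanSpace.inner_eq_star_dotProduct, star_trivial, dotProduct_comm] at this
      exact this
    have : q ⬝ᵥ u.ofLp = (S.orthogonalProjection q' : EuclideanSpace ℝ (Fin n)).ofLp ⬝ᵥ u.ofLp + u.ofLp ⬝ᵥ u.ofLp := by
      rw [← add_dotProduct]
      congr 1
      have : u.ofLp = q - (S.orthogonalProjection q' : EuclideanSpace ℝ (Fin n)).ofLp := rfl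
      funext i; simp [this]
    rw [this, h2, zero_add]
  rw [hqu]
  intro h
  exact hune (by ext i; exact congrFun ((dotProduct_self_eq_zero).mp h) i)

private lemma aux_unbdd (n : ℕ) (P : Matrix (Fin n) (Fin n) ℝ) (hsymm : Pᵀ = P)
    (q : Fin n → ℝ) (w : Fin n → ℝ) (hPw : P *ᵥ w = 0) (hd : q ⬝ᵥ w < 0) :
    ¬ BddBelow {y : ℝ | ∃ x : Fin n → ℤ,
      y = (fun i => (x i : ℝ)) ⬝ᵥ (P *ᵥ fun i => (x i : ℝ))
        + 2 * (q ⬝ᵥ fun i => (x i : ℝ))} := by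
  rintro ⟨b, hb⟩
  set d := q ⬝ᵥ w with hdd
  set B : ℝ := ∑ i, ∑ j, |P i j| with hB
  set Q : ℝ := ∑ i, |q i| with hQ
  set t : ℝ := (b - B/4 - Q - 1) / (2*d) with ht
  set x : Fin n → ℤ := fun i => round (t * w i) with hx
  set r : Fin n → ℝ := fun i => (x i : ℝ) with hr
  set e : Fin n → ℝ := fun i => r i - t * w i with he
  have hebd : ∀ i, |e i| ≤ 1/2 := fun i => by
    rw [he]; simp only [hr, hx, abs_sub_comm]; simpa using abs_sub_round (t * w i)
  have hre : r = t • w + e := by funext i; simp [he]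
  have hPr : P *ᵥ r = P *ᵥ e := by
    rw [hre, Matrix.mulVec_add, Matrix.mulVec_smul, hPw]; simp
  have hwPe : w ⬝ᵥ (P *ᵥ e) = 0 := by
    rw [Matrix.dotProduct_mulVec, ← Matrix.mulVec_transpose, hsymm, hPw]
    simp
  have h1 : r ⬝ᵥ (P *ᵥ r) = e ⬝ᵥ (P *ᵥ e) := by
    rw [hPr, hre, add_dotProduct, smul_dotProduct, hwPe]
    simp
  have h2 : q ⬝ᵥ r = t * d + q ⬝ᵥ e := by
    rw [hre, dotProduct_add, dotProduct_smul, hdd]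
    ring_nf
  have hePe : e ⬝ᵥ (P *ᵥ e) ≤ B/4 := by
    have : e ⬝ᵥ (P *ᵥ e) = ∑ i, ∑ j, e i * (P i j * e j) := by
      simp [dotProduct, mulVec, Finset.mul_sum]
    rw [this, hB]
    rw [Finset.sum_div]
    refine Finset.sum_le_sum fun i _ => ?_
    rw [Finset.sum_div]
    refine Finset.sum_le_sum fun j _ => ?_
    calc e i * (P i j * e j) ≤ |e i * (P i j * e j)| := le_abs_self _
      _ = |e i| * |P i j| * |e j| := by rw [abs_mul, abs_mul]; ring
      _ ≤ (1/2) * |P i j| * (1/2) := by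
          apply mul_le_mul (mul_le_mul_of_nonneg_right (hebd i) (abs_nonneg _))
            (hebd j) (abs_nonneg _)
          positivity
      _ = |P i j| / 4 := by ring
  have hqe : q ⬝ᵥ e ≤ Q/2 := by
    have : q ⬝ᵥ e = ∑ i, q i * e i := rfl
    rw [this, hQ, Finset.sum_div]
    refine Finset.sum_le_sum fun i _ => ?_
    calc q i * e i ≤ |q i * e i| := le_abs_self _
      _ = |q i| * |e i| := abs_mul _ _
      _ ≤ |q i| * (1/2) := mul_le_mul_of_nonneg_left (hebd i) (abs_nonneg _)
      _ = |q i| / 2 := by ring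
  have hd0 : d ≠ 0 := ne_of_lt hd
  have htd : 2 * (t * d) = b - B/4 - Q - 1 := by
    rw [ht]
    field_simp
  have hmem : r ⬝ᵥ (P *ᵥ r) + 2 * (q ⬝ᵥ r) ∈ {y : ℝ | ∃ x : Fin n → ℤ,
      y = (fun i => (x i : ℝ)) ⬝ᵥ (P *ᵥ fun i => (x i : ℝ))
        + 2 * (q ⬝ᵥ fun i => (x i : ℝ))} := ⟨x, rfl⟩
  have := hb hmem
  rw [h1, h2] at this
  nlinarith [hePe, hqe, htd]

/-- If `q` is not in the range of a symmetric PSD matrix `P`, then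
`f(x) = xᵀPx + 2qᵀx` is unbounded below on the integer lattice `ℤⁿ`. -/
theorem stmt_1 (n : ℕ) (P : Matrix (Fin n) (Fin n) ℝ) (hP : P.PosSemidef)
    (q : Fin n → ℝ) (hq : ¬ ∃ v : Fin n → ℝ, P *ᵥ v = q) :
    ¬ BddBelow {y : ℝ | ∃ x : Fin n → ℤ,
      y = (fun i => (x i : ℝ)) ⬝ᵥ (P *ᵥ fun i => (x i : ℝ))
        + 2 * (q ⬝ᵥ fun i => (x i : ℝ))} := by
  obtain ⟨u, hPu, hqu⟩ := aux_exists_kernel_vec n P hP q hq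
  have hsymm : Pᵀ = P := by
    have := hP.1; rwa [Matrix.IsHermitian, conjTranspose_eq_transpose_of_trivial] at this
  by_cases hc : q ⬝ᵥ u < 0
  · exact aux_unbdd n P hsymm q u hPu hc
  · refine aux_unbdd n P hsymm q (-u) ?_ ?_
    · rw [Matrix.mulVec_neg, hPu]; simp
    · rw [dotProduct_neg]
      push_neg at hc
      cases' lt_or_eq_of_le hc with h h
      · linarith
      · exact absurd h.symm hqu
end

section
/- Let P be a symmetric n×n real matrix, q ∈ ℝⁿ, and f(x) = xᵀPx + 2qᵀx. Suppose λ ∈ ℝⁿ with λ ≥ 0 componentwise and γ ∈ ℝ are such that the (n+1)×(n+1) block matrix [[P − diag(λ), q + (1/2)λ], [(q + (1/2)λ)ᵀ, γ]] is positive semidefinite. Then f(x) ≥ −γ for every x ∈ ℤⁿ. In particular, the optimal value of the dual SDP sup{−γ : λ ≥ 0, block matrix PSD} is a lower bound on the optimal value of the integer problem min_{x∈ℤⁿ} f(x). -/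
open Matrix

/-- Any dual-feasible `(λ, γ)` (i.e. `λ ≥ 0` and the block matrix
`[[P - diag λ, q + λ/2], [(q + λ/2)ᵀ, γ]]` is PSD) certifies the lower bound
`f(x) ≥ -γ` for all integer `x`. -/
theorem stmt_6 (n : ℕ) (P : Matrix (Fin n) (Fin n) ℝ) (hP : P.IsSymm)
    (q lam : Fin n → ℝ) (hlam : ∀ i, 0 ≤ lam i) (γ : ℝ)
    (hpsd : (Matrix.fromBlocks (P - Matrix.diagonal lam)
        (Matrix.of fun i (_ : Unit) => (q + (1 / 2 : ℝ) • lam) i)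
        (Matrix.of fun (_ : Unit) j => (q + (1 / 2 : ℝ) • lam) j)
        (Matrix.of fun (_ : Unit) (_ : Unit) => γ)).PosSemidef) :
    ∀ x : Fin n → ℤ,
      -γ ≤ (fun i => (x i : ℝ)) ⬝ᵥ (P *ᵥ fun i => (x i : ℝ))
          + 2 * (q ⬝ᵥ fun i => (x i : ℝ)) := by
  intro x
  set xr : Fin n → ℝ := fun i => (x i : ℝ) with hxr
  have h := hpsd.dotProduct_mulVec_nonneg (Sum.elim xr fun _ => (1:ℝ))
  simp only [star_trivial, Sum.elim_comp_inl, Sum.elim_comp_inr,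
    sumElim_dotProduct_sumElim, Matrix.fromBlocks_mulVec] at h
  simp only [Matrix.mulVec, dotProduct, Matrix.sub_apply, Matrix.diagonal_apply,
    Matrix.of_apply, Pi.add_apply, Pi.smul_apply, smul_eq_mul,
    Finset.univ_unique, Finset.sum_singleton, mul_one, one_mul, sub_mul,
    Finset.sum_sub_distrib, Finset.sum_ite_eq, Finset.mem_univ, if_true,
    Pi.sub_apply, mul_add, add_mul, Finset.sum_add_distrib] at h
  have hite : ∀ i : Fin n, ∑ j, (if i = j then lam i else 0) * xr j = lam i * xr i := by
    intro i
    simp [ite_mul]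
  simp only [hite] at h
  simp only [Matrix.mulVec, dotProduct]
  have e1 : ∑ i, xr i * ((∑ j, P i j * xr j) - lam i * xr i)
      = (∑ i, xr i * ∑ j, P i j * xr j) - ∑ i, lam i * (xr i * xr i) := by
    simp only [mul_sub, Finset.sum_sub_distrib]
    congr 1
    exact Finset.sum_congr rfl fun i _ => by ring
  have e2 : ∑ i, xr i * q i = ∑ i, q i * xr i :=
    Finset.sum_congr rfl fun i _ => by ring
  have e3 : ∑ i, xr i * (1 / 2 * lam i) = (1 / 2) * ∑ i, lam i * xr i := by
    rw [Finset.mul_sum]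
    exact Finset.sum_congr rfl fun i _ => by ring
  have e4 : ∑ i, 1 / 2 * lam i * xr i = (1 / 2) * ∑ i, lam i * xr i := by
    rw [Finset.mul_sum]
    exact Finset.sum_congr rfl fun i _ => by ring
  rw [e1, e2, e3, e4] at h
  have hkey : 0 ≤ (∑ i, lam i * (xr i * xr i)) - ∑ i, lam i * xr i := by
    rw [← Finset.sum_sub_distrib]
    apply Finset.sum_nonneg
    intro i _
    have hint : 0 ≤ x i * (x i - 1) := by
      rcases le_or_gt (x i) 0 with hc | hc <;> nlinarith
    have hr : (0:ℝ) ≤ xr i * (xr i - 1) := by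
      have : ((x i * (x i - 1) : ℤ) : ℝ) = xr i * (xr i - 1) := by push_cast [hxr]; ring
      rw [← this]
      exact_mod_cast hint
    nlinarith [hlam i]
  linarith
end

section
/- Let P be a symmetric positive definite n×n real matrix with smallest eigenvalue ω_min, q ∈ ℝⁿ, and f(x) = xᵀPx + 2qᵀx. For every α with 0 ≤ α < ω_min, the matrix P − αI is positive definite (hence invertible), and for every x ∈ ℤⁿ, f(x) ≥ −(q + (α/2)𝟏)ᵀ (P − αI)⁻¹ (q + (α/2)𝟏). -/
open Matrix

lemma stmt_10_int_le_sq (t : ℤ) : t ≤ t * t := by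
  rcases le_or_gt 1 t with h | h
  · nlinarith
  · have ht : t ≤ 0 := by omega
    nlinarith [mul_self_nonneg t]

lemma stmt_10_key {n : ℕ} {A : Matrix (Fin n) (Fin n) ℝ} (hA : A.PosDef) (b v : Fin n → ℝ) :
    -(b ⬝ᵥ (A⁻¹ *ᵥ b)) ≤ v ⬝ᵥ (A *ᵥ v) + 2 * (b ⬝ᵥ v) := by
  have hinv : A * A⁻¹ = 1 := mul_nonsing_inv _ hA.det_pos.ne'.isUnit
  have hT : Aᵀ = A := by
    have h := hA.isHermitian.eq
    ext i j
    calc Aᵀ i j = A j i := rfl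
    _ = star (A j i) := (star_trivial _).symm
    _ = Aᴴ i j := rfl
    _ = A i j := by rw [h]
  have hAb : A *ᵥ (A⁻¹ *ᵥ b) = b := by
    rw [mulVec_mulVec, hinv, one_mulVec]
  have h0 : 0 ≤ (v + A⁻¹ *ᵥ b) ⬝ᵥ (A *ᵥ (v + A⁻¹ *ᵥ b)) := by
    simpa using hA.posSemidef.dotProduct_mulVec_nonneg (v + A⁻¹ *ᵥ b)
  have hsym : (A⁻¹ *ᵥ b) ⬝ᵥ (A *ᵥ v) = b ⬝ᵥ v := by
    rw [dotProduct_mulVec, ← mulVec_transpose, hT, hAb]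
  have hcomm : (A⁻¹ *ᵥ b) ⬝ᵥ b = b ⬝ᵥ (A⁻¹ *ᵥ b) := dotProduct_comm _ _
  have hvb : v ⬝ᵥ b = b ⬝ᵥ v := dotProduct_comm _ _
  rw [mulVec_add, hAb, add_dotProduct, dotProduct_add, dotProduct_add] at h0
  linarith

/-- For a positive definite `P` and `0 ≤ α < ω_min`, the matrix `P - αI` is positive
definite, and `f(x) ≥ -(q + (α/2)𝟏)ᵀ (P - αI)⁻¹ (q + (α/2)𝟏)` for every integer `x`. -/
theorem stmt_10 (n : ℕ) (P : Matrix (Fin n) (Fin n) ℝ) (hP : P.PosDef)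
    (ωmin : ℝ) (hωmin : IsLeast (Set.range hP.1.eigenvalues) ωmin)
    (q : Fin n → ℝ) (α : ℝ) (hα : 0 ≤ α) (hα' : α < ωmin) :
    (P - α • (1 : Matrix (Fin n) (Fin n) ℝ)).PosDef ∧
      ∀ x : Fin n → ℤ,
        -((q + (α / 2) • (fun _ => 1 : Fin n → ℝ)) ⬝ᵥ
            ((P - α • (1 : Matrix (Fin n) (Fin n) ℝ))⁻¹ *ᵥ
              (q + (α / 2) • (fun _ => 1 : Fin n → ℝ)))) ≤
          (fun i => (x i : ℝ)) ⬝ᵥ (P *ᵥ fun i => (x i : ℝ))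
            + 2 * (q ⬝ᵥ fun i => (x i : ℝ)) := by
  have hApd : (P - α • (1 : Matrix (Fin n) (Fin n) ℝ)).PosDef := by
    have hU := (Matrix.mem_unitaryGroup_iff).mp hP.1.eigenvectorUnitary.2
    have hsemi : (P - ωmin • (1 : Matrix (Fin n) (Fin n) ℝ)).PosSemidef := by
      have hrep : P - ωmin • (1 : Matrix (Fin n) (Fin n) ℝ) =
          (hP.1.eigenvectorUnitary : Matrix (Fin n) (Fin n) ℝ) *
            diagonal (fun i => hP.1.eigenvalues i - ωmin) *
            (star (hP.1.eigenvectorUnitary : Matrix (Fin n) (Fin n) ℝ)) := by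
        have hd : diagonal (fun i => hP.1.eigenvalues i - ωmin) =
            diagonal (RCLike.ofReal ∘ hP.1.eigenvalues)
              - ωmin • (1 : Matrix (Fin n) (Fin n) ℝ) := by
          rw [smul_one_eq_diagonal, ← diagonal_sub]
          rfl
        rw [hd, mul_sub, sub_mul, ← Unitary.conjStarAlgAut_apply (S := ℝ), ← hP.1.spectral_theorem]
        congr 1
        rw [Matrix.mul_smul, smul_mul_assoc, mul_one, hU]
      rw [hrep]
      exact (posSemidef_diagonal_iff.mpr fun i => sub_nonneg.mpr (hωmin.2 ⟨i, rfl⟩)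
        ).mul_mul_conjTranspose_same _
    have hpos : ((ωmin - α) • (1 : Matrix (Fin n) (Fin n) ℝ)).PosDef := by
      rw [smul_one_eq_diagonal]
      exact PosDef.diagonal fun _ => sub_pos.mpr hα'
    have hsum := hpos.add_posSemidef hsemi
    have heq : (ωmin - α) • (1 : Matrix (Fin n) (Fin n) ℝ) + (P - ωmin • 1) =
        P - α • (1 : Matrix (Fin n) (Fin n) ℝ) := by
      rw [sub_smul]; abel
    rwa [heq] at hsum
  refine ⟨hApd, fun x => ?_⟩
  set v : Fin n → ℝ := fun i => (x i : ℝ) with hv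
  set b : Fin n → ℝ := q + (α / 2) • (fun _ => 1 : Fin n → ℝ) with hb
  have hkey := stmt_10_key hApd b v
  have hAv : v ⬝ᵥ ((P - α • (1 : Matrix (Fin n) (Fin n) ℝ)) *ᵥ v)
      = v ⬝ᵥ (P *ᵥ v) - α * (v ⬝ᵥ v) := by
    rw [sub_mulVec, dotProduct_sub, smul_mulVec, one_mulVec, dotProduct_smul,
      smul_eq_mul]
  have hbv : b ⬝ᵥ v = q ⬝ᵥ v + (α / 2) * ((fun _ => 1 : Fin n → ℝ) ⬝ᵥ v) := by
    rw [hb, add_dotProduct, smul_dotProduct, smul_eq_mul]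
  have hmono : α * ((fun _ => 1 : Fin n → ℝ) ⬝ᵥ v) ≤ α * (v ⬝ᵥ v) := by
    apply mul_le_mul_of_nonneg_left _ hα
    unfold dotProduct
    apply Finset.sum_le_sum
    intro i _
    have : (x i : ℝ) ≤ (x i : ℝ) * (x i : ℝ) := by
      exact_mod_cast stmt_10_int_le_sq (x i)
    simpa [hv] using this
  rw [hAv, hbv] at hkey
  linarith
end

section
/- Let P = Q diag(ω) Qᵀ with Q an orthogonal n×n real matrix and ω ∈ ℝⁿ with all ωᵢ > 0; let ω_min = minᵢ ωᵢ, q ∈ ℝⁿ, s = Qᵀ𝟏, q̃ = Qᵀq, and for 0 ≤ α < ω_min define g(α) = −(q + (α/2)𝟏)ᵀ (P − αI)⁻¹ (q + (α/2)𝟏). Then for all 0 ≤ α < ω_min: g(α) = −Σᵢ (q̃ᵢ² + α sᵢ q̃ᵢ + (1/4)α² sᵢ²)/(ωᵢ − α), and g(α) − g(0) = (αn)/4 − α Σᵢ (1 − α/ωᵢ) ((q̃ᵢ + (1/2)ωᵢ sᵢ)/(ωᵢ − α))². -/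
open Matrix

/-- Explicit eigenbasis formulas for the restricted dual function
`g(α) = -(q + (α/2)𝟏)ᵀ(P - αI)⁻¹(q + (α/2)𝟏)` and for `g(α) - g(0)`. -/
theorem stmt_11 (n : ℕ) (Q : Matrix (Fin n) (Fin n) ℝ) (hQ : Qᵀ * Q = 1)
    (ω : Fin n → ℝ) (hω : ∀ i, 0 < ω i)
    (P : Matrix (Fin n) (Fin n) ℝ) (hP : P = Q * Matrix.diagonal ω * Qᵀ)
    (ωmin : ℝ) (hωmin : IsLeast (Set.range ω) ωmin)
    (q s qt : Fin n → ℝ)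
    (hs : s = Qᵀ *ᵥ (fun _ => 1)) (hqt : qt = Qᵀ *ᵥ q)
    (g : ℝ → ℝ)
    (hg : ∀ α, g α = -((q + (α / 2) • (fun _ => 1 : Fin n → ℝ)) ⬝ᵥ
      ((P - α • (1 : Matrix (Fin n) (Fin n) ℝ))⁻¹ *ᵥ
        (q + (α / 2) • (fun _ => 1 : Fin n → ℝ))))) :
    ∀ α : ℝ, 0 ≤ α → α < ωmin →
      g α = -∑ i, (qt i ^ 2 + α * s i * qt i + (1 / 4) * α ^ 2 * s i ^ 2) / (ω i - α) ∧
      g α - g 0 = α * n / 4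
        - α * ∑ i, (1 - α / ω i) * ((qt i + (1 / 2) * ω i * s i) / (ω i - α)) ^ 2 := by
  have hQQ : Q * Qᵀ = 1 := mul_eq_one_comm.mp hQ
  -- key formula for g at any α < all eigenvalues
  have key : ∀ α : ℝ, (∀ i, α < ω i) →
      g α = -∑ i, (qt i + α / 2 * s i) ^ 2 / (ω i - α) := by
    intro α hα
    have hd : ∀ i, ω i - α ≠ 0 := fun i => ne_of_gt (sub_pos.mpr (hα i))
    have hPα : P - α • (1 : Matrix (Fin n) (Fin n) ℝ)
        = Q * Matrix.diagonal (fun i => ω i - α) * Qᵀ := by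
      have hdiagα : Matrix.diagonal (fun _ : Fin n => α) = α • (1 : Matrix (Fin n) (Fin n) ℝ) := by
        ext i j; by_cases h : i = j <;> simp [h, Matrix.one_apply]
      have h1 : (α • (1 : Matrix (Fin n) (Fin n) ℝ))
          = Q * Matrix.diagonal (fun _ => α) * Qᵀ := by
        rw [hdiagα, Matrix.mul_smul, Matrix.smul_mul, mul_one, hQQ]
      have h2 : Matrix.diagonal ω - Matrix.diagonal (fun _ : Fin n => α)
          = Matrix.diagonal (fun i => ω i - α) := by
        ext i j; by_cases h : i = j <;> simp [h]
      rw [hP, h1, Matrix.mul_assoc, Matrix.mul_assoc, ← Matrix.mul_sub, ← Matrix.sub_mul, h2,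
        ← Matrix.mul_assoc]
    have hinv : (P - α • (1 : Matrix (Fin n) (Fin n) ℝ))⁻¹
        = Q * Matrix.diagonal (fun i => (ω i - α)⁻¹) * Qᵀ := by
      apply Matrix.inv_eq_right_inv
      rw [hPα]
      calc Q * Matrix.diagonal (fun i => ω i - α) * Qᵀ *
            (Q * Matrix.diagonal (fun i => (ω i - α)⁻¹) * Qᵀ)
          = Q * Matrix.diagonal (fun i => ω i - α) * (Qᵀ * Q) *
            Matrix.diagonal (fun i => (ω i - α)⁻¹) * Qᵀ := by
            simp only [Matrix.mul_assoc]
        _ = Q * (Matrix.diagonal (fun i => ω i - α) *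
            Matrix.diagonal (fun i => (ω i - α)⁻¹)) * Qᵀ := by
            rw [hQ, Matrix.mul_one]; simp only [Matrix.mul_assoc]
        _ = 1 := by
            rw [Matrix.diagonal_mul_diagonal]
            have : (fun i => (ω i - α) * (ω i - α)⁻¹) = fun _ : Fin n => (1:ℝ) := by
              funext i; exact mul_inv_cancel₀ (hd i)
            rw [this, Matrix.diagonal_one, Matrix.mul_one, hQQ]
    set v : Fin n → ℝ := q + (α / 2) • (fun _ => 1 : Fin n → ℝ) with hv
    have hQtv : Qᵀ *ᵥ v = fun i => qt i + α / 2 * s i := by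
      funext i
      rw [hv, Matrix.mulVec_add, Matrix.mulVec_smul, ← hs, ← hqt]
      simp
    have : g α = -((Qᵀ *ᵥ v) ⬝ᵥ (Matrix.diagonal (fun i => (ω i - α)⁻¹) *ᵥ (Qᵀ *ᵥ v))) := by
      rw [hg, hinv, ← Matrix.mulVec_mulVec, ← Matrix.mulVec_mulVec,
        Matrix.dotProduct_mulVec v Q, ← Matrix.mulVec_transpose, Matrix.dotProduct_mulVec]
    rw [this, hQtv]
    congr 1
    rw [dotProduct]
    apply Finset.sum_congr rfl
    intro i _
    rw [Matrix.mulVec_diagonal]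
    field_simp
  intro α hα0 hαmin
  have hα : ∀ i, α < ω i := fun i => lt_of_lt_of_le hαmin (hωmin.2 ⟨i, rfl⟩)
  have h0 : ∀ i, (0:ℝ) < ω i := hω
  have hd : ∀ i, ω i - α ≠ 0 := fun i => ne_of_gt (sub_pos.mpr (hα i))
  have hω' : ∀ i, ω i ≠ 0 := fun i => ne_of_gt (hω i)
  have hga := key α hα
  have hg0 := key 0 (fun i => hω i)
  constructor
  · rw [hga]
    congr 1
    apply Finset.sum_congr rfl
    intro i _
    field_simp
    ring
  · -- ∑ s i ^ 2 = n
    have hsn : ∑ i, s i ^ 2 = n := by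
      have h1 : s ⬝ᵥ s = (n:ℝ) := by
        rw [hs, Matrix.dotProduct_mulVec, Matrix.vecMul_transpose, Matrix.mulVec_mulVec, hQQ]
        simp [dotProduct]
      rw [← h1]; simp [dotProduct, sq]
    rw [hga, hg0]
    have hrw : α * (n:ℝ) / 4 = ∑ i, α * s i ^ 2 / 4 := by
      rw [← Finset.sum_div, ← Finset.mul_sum, hsn]
    rw [hrw, ← Finset.sum_neg_distrib, ← Finset.sum_neg_distrib, Finset.mul_sum,
      ← Finset.sum_sub_distrib, ← Finset.sum_sub_distrib]
    apply Finset.sum_congr rfl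
    intro i _
    have h1 := hd i
    have h2 := hω' i
    field_simp
    ring
end

section
/- Let P = Q diag(ω) Qᵀ with Q an orthogonal n×n real matrix and ω ∈ ℝⁿ with all ωᵢ > 0; let ω_min = minᵢ ωᵢ, q ∈ ℝⁿ, s = Qᵀ𝟏, q̃ = Qᵀq, and for 0 ≤ α < ω_min define g(α) = −(q + (α/2)𝟏)ᵀ (P − αI)⁻¹ (q + (α/2)𝟏). Then g is differentiable at every α ∈ [0, ω_min) with derivative g'(α) = n/4 − Σᵢ ((q̃ᵢ + (1/2)ωᵢ sᵢ)/(ωᵢ − α))². -/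
open Matrix

/-- The restricted dual function `g(α) = -(q + (α/2)𝟏)ᵀ(P - αI)⁻¹(q + (α/2)𝟏)` is
differentiable on `[0, ω_min)` with derivative
`g'(α) = n/4 - ∑ᵢ ((q̃ᵢ + ωᵢsᵢ/2)/(ωᵢ - α))²`. -/
theorem stmt_12 (n : ℕ) (Q : Matrix (Fin n) (Fin n) ℝ) (hQ : Qᵀ * Q = 1)
    (ω : Fin n → ℝ) (hω : ∀ i, 0 < ω i)
    (P : Matrix (Fin n) (Fin n) ℝ) (hP : P = Q * Matrix.diagonal ω * Qᵀ)
    (ωmin : ℝ) (hωmin : IsLeast (Set.range ω) ωmin)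
    (q s qt : Fin n → ℝ)
    (hs : s = Qᵀ *ᵥ (fun _ => 1)) (hqt : qt = Qᵀ *ᵥ q)
    (g : ℝ → ℝ)
    (hg : ∀ α, g α = -((q + (α / 2) • (fun _ => 1 : Fin n → ℝ)) ⬝ᵥ
      ((P - α • (1 : Matrix (Fin n) (Fin n) ℝ))⁻¹ *ᵥ
        (q + (α / 2) • (fun _ => 1 : Fin n → ℝ))))) :
    ∀ α : ℝ, 0 ≤ α → α < ωmin →
      HasDerivAt g
        ((n : ℝ) / 4 - ∑ i, ((qt i + (1 / 2) * ω i * s i) / (ω i - α)) ^ 2) α := by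
  intro α hα0 hα
  have hle : ∀ i, ωmin ≤ ω i := fun i => hωmin.2 ⟨i, rfl⟩
  have hQQ : Q * Qᵀ = 1 := mul_eq_one_comm.mp hQ
  -- ∑ sᵢ² = n
  have hss : ∑ i, s i ^ 2 = (n : ℝ) := by
    have h1 : ∑ i, s i ^ 2 = s ⬝ᵥ s := by
      simp [dotProduct, sq]
    have h2 : s ⬝ᵥ s = (fun _ => (1:ℝ) : Fin n → ℝ) ⬝ᵥ (fun _ => (1:ℝ) : Fin n → ℝ) := by
      nth_rewrite 1 [hs]
      rw [Matrix.mulVec_transpose, ← Matrix.dotProduct_mulVec, hs,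
        Matrix.mulVec_mulVec, hQQ, Matrix.one_mulVec]
    rw [h1, h2]
    simp [dotProduct]
  -- closed form of g below ωmin
  have hgf : ∀ x ∈ Set.Iio ωmin, g x = -∑ i, (qt i + x / 2 * s i) ^ 2 * (ω i - x)⁻¹ := by
    intro x hx
    have hne : ∀ i, ω i - x ≠ 0 := fun i => sub_ne_zero.mpr (lt_of_lt_of_le hx (hle i)).ne'
    set D := Matrix.diagonal (fun i => ω i - x) with hD
    set D' := Matrix.diagonal (fun i => (ω i - x)⁻¹) with hD'
    have hPD : P - x • (1 : Matrix (Fin n) (Fin n) ℝ) = Q * D * Qᵀ := by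
      have h1 : (x • (1 : Matrix (Fin n) (Fin n) ℝ)) = Q * (x • 1) * Qᵀ := by
        rw [Matrix.mul_smul, Matrix.mul_one, Matrix.smul_mul, hQQ]
      rw [hP, h1, ← Matrix.sub_mul, ← Matrix.mul_sub]
      congr 2
      ext i j
      rcases eq_or_ne i j with h | h <;>
        simp [hD, Matrix.diagonal_apply, Matrix.one_apply, h]
    have hinv : (P - x • (1 : Matrix (Fin n) (Fin n) ℝ))⁻¹ = Q * D' * Qᵀ := by
      apply Matrix.inv_eq_right_inv
      rw [hPD]
      have hassoc : Q * D * Qᵀ * (Q * D' * Qᵀ) = Q * (D * ((Qᵀ * Q) * (D' * Qᵀ))) := by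
        simp only [Matrix.mul_assoc]
      rw [hassoc, hQ, Matrix.one_mul, ← Matrix.mul_assoc D D',
        Matrix.diagonal_mul_diagonal]
      have hdd : (fun i => (ω i - x) * (ω i - x)⁻¹) = fun _ => (1:ℝ) := by
        funext i; exact mul_inv_cancel₀ (hne i)
      rw [hdd]
      simp [← Matrix.mul_assoc, hQQ]
    rw [hg x, hinv]
    set v : Fin n → ℝ := q + (x / 2) • (fun _ => 1 : Fin n → ℝ) with hv
    have hQv : Qᵀ *ᵥ v = fun i => qt i + x / 2 * s i := by
      funext i
      simp [hv, Matrix.mulVec_add, Matrix.mulVec_smul, hqt, hs]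
    have hform : v ⬝ᵥ ((Q * D' * Qᵀ) *ᵥ v) = ∑ i, (qt i + x / 2 * s i) ^ 2 * (ω i - x)⁻¹ := by
      rw [← Matrix.mulVec_mulVec, ← Matrix.mulVec_mulVec, Matrix.dotProduct_mulVec,
        ← Matrix.mulVec_transpose, hQv]
      simp only [hD', Matrix.mulVec_diagonal, dotProduct]
      exact Finset.sum_congr rfl fun i _ => by ring
    rw [hform]
  -- derivative of the closed form
  have hne : ∀ i, ω i - α ≠ 0 := fun i => sub_ne_zero.mpr (lt_of_lt_of_le hα (hle i)).ne'
  have hderiv : HasDerivAt (fun x => -∑ i, (qt i + x / 2 * s i) ^ 2 * (ω i - x)⁻¹)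
      ((n : ℝ) / 4 - ∑ i, ((qt i + (1 / 2) * ω i * s i) / (ω i - α)) ^ 2) α := by
    have hterm : ∀ i : Fin n, HasDerivAt (fun x => (qt i + x / 2 * s i) ^ 2 * (ω i - x)⁻¹)
        (((qt i + (1 / 2) * ω i * s i) / (ω i - α)) ^ 2 - (s i) ^ 2 / 4) α := by
      intro i
      have h1 : HasDerivAt (fun x : ℝ => qt i + x / 2 * s i) (s i / 2) α := by
        have := (((hasDerivAt_id α).div_const 2).mul_const (s i)).const_add (qt i)
        simpa [mul_comm, div_mul_eq_mul_div, div_eq_mul_inv] using this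
      have h3 : HasDerivAt (fun x : ℝ => ω i - x) (-1) α := by
        simpa using (hasDerivAt_id α).const_sub (ω i)
      have h2 := h3.inv (hne i)
      have h := (h1.pow 2).mul h2
      convert h using 1
      iterate 3 rfl
      simp only [Pi.inv_apply, Pi.pow_apply]
      obtain ⟨b, hb, hωi⟩ : ∃ b, b ≠ 0 ∧ ω i = b + α := ⟨ω i - α, hne i, by ring⟩
      rw [hωi]
      simp only [add_sub_cancel_right]
      field_simp
      ring
    have hsum := HasDerivAt.fun_sum (fun i (_ : i ∈ Finset.univ) => hterm i)
    have hneg := hsum.neg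
    convert hneg using 1
    iterate 3 rfl
    rw [Finset.sum_sub_distrib]
    have h4 : ∑ i : Fin n, s i ^ 2 / 4 = (n : ℝ) / 4 := by
      rw [← Finset.sum_div, hss]
    rw [h4]
    ring
  exact hderiv.congr_of_eventuallyEq
    (Filter.eventuallyEq_of_mem (Iio_mem_nhds hα) hgf)
end

section
/- Let P = Q diag(ω) Qᵀ with Q an orthogonal n×n real matrix and ω ∈ ℝⁿ with all ωᵢ > 0; let ω_min = minᵢ ωᵢ and ω_max = maxᵢ ωᵢ, q ∈ ℝⁿ, s = Qᵀ𝟏, q̃ = Qᵀq, and for 0 ≤ α < ω_min define g(α) = −(q + (α/2)𝟏)ᵀ (P − αI)⁻¹ (q + (α/2)𝟏). Suppose α* ∈ [0, ω_min) satisfies the first-order condition Σᵢ ((q̃ᵢ + (1/2)ωᵢ sᵢ)/(ωᵢ − α*))² = n/4. Then g(α*) − g(0) = Σᵢ (α*²/ωᵢ) ((q̃ᵢ + (1/2)ωᵢ sᵢ)/(ωᵢ − α*))² ≥ n α*² / (4 ω_max). -/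
open Matrix

/-- At a stationary point `α*` of the restricted dual function (first-order condition
`∑ᵢ ((q̃ᵢ + ωᵢsᵢ/2)/(ωᵢ - α*))² = n/4`), one has
`g(α*) - g(0) = ∑ᵢ (α*²/ωᵢ)((q̃ᵢ + ωᵢsᵢ/2)/(ωᵢ - α*))² ≥ n α*² / (4 ω_max)`. -/
theorem stmt_14 (n : ℕ) (Q : Matrix (Fin n) (Fin n) ℝ) (hQ : Qᵀ * Q = 1)
    (ω : Fin n → ℝ) (hω : ∀ i, 0 < ω i)
    (P : Matrix (Fin n) (Fin n) ℝ) (hP : P = Q * Matrix.diagonal ω * Qᵀ)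
    (ωmin ωmax : ℝ) (hωmin : IsLeast (Set.range ω) ωmin)
    (hωmax : IsGreatest (Set.range ω) ωmax)
    (q s qt : Fin n → ℝ)
    (hs : s = Qᵀ *ᵥ (fun _ => 1)) (hqt : qt = Qᵀ *ᵥ q)
    (g : ℝ → ℝ)
    (hg : ∀ α, g α = -((q + (α / 2) • (fun _ => 1 : Fin n → ℝ)) ⬝ᵥ
      ((P - α • (1 : Matrix (Fin n) (Fin n) ℝ))⁻¹ *ᵥ
        (q + (α / 2) • (fun _ => 1 : Fin n → ℝ)))))
    (αs : ℝ) (hαs0 : 0 ≤ αs) (hαs1 : αs < ωmin)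
    (hfoc : ∑ i, ((qt i + (1 / 2) * ω i * s i) / (ω i - αs)) ^ 2 = (n : ℝ) / 4) :
    g αs - g 0 = ∑ i, (αs ^ 2 / ω i) * ((qt i + (1 / 2) * ω i * s i) / (ω i - αs)) ^ 2 ∧
      (n : ℝ) * αs ^ 2 / (4 * ωmax) ≤
        ∑ i, (αs ^ 2 / ω i) * ((qt i + (1 / 2) * ω i * s i) / (ω i - αs)) ^ 2 := by
  have hQQ : Q * Qᵀ = 1 := mul_eq_one_comm.mp hQ
  have hωle : ∀ i, ωmin ≤ ω i := fun i => hωmin.2 (Set.mem_range_self i)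
  have hωub : ∀ i, ω i ≤ ωmax := fun i => hωmax.2 (Set.mem_range_self i)
  have hwa : ∀ i, 0 < ω i - αs := fun i => by have := hωle i; linarith
  -- ‖s‖² = n
  have hsum_s : ∑ i, s i ^ 2 = (n : ℝ) := by
    have h1 : ∑ i, s i ^ 2 = s ⬝ᵥ s := by
      simp [dotProduct, pow_two]
    rw [h1, hs, Matrix.dotProduct_mulVec, Matrix.vecMul_transpose,
      Matrix.mulVec_mulVec, hQQ]
    simp [dotProduct]
  -- key formula for g
  have key : ∀ α : ℝ, (∀ i, ω i - α ≠ 0) →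
      g α = -∑ i, (qt i + (α / 2) * s i) ^ 2 / (ω i - α) := by
    intro α hα
    have hPα : P - α • (1 : Matrix (Fin n) (Fin n) ℝ)
        = Q * Matrix.diagonal (fun i => ω i - α) * Qᵀ := by
      have hdiag : Matrix.diagonal (fun i => ω i - α)
          = Matrix.diagonal ω - α • (1 : Matrix (Fin n) (Fin n) ℝ) := by
        ext i j
        by_cases h : i = j <;>
          simp [Matrix.diagonal_apply, Matrix.one_apply, h]
      rw [hdiag, Matrix.mul_sub, Matrix.sub_mul, hP]
      congr 1
      rw [Matrix.mul_smul, Matrix.mul_one, Matrix.smul_mul, hQQ]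
    have hinv : (P - α • (1 : Matrix (Fin n) (Fin n) ℝ))⁻¹
        = Q * Matrix.diagonal (fun i => (ω i - α)⁻¹) * Qᵀ := by
      apply Matrix.inv_eq_right_inv
      rw [hPα]
      have hDD : Matrix.diagonal (fun i => ω i - α) *
          Matrix.diagonal (fun i => (ω i - α)⁻¹) = 1 := by
        rw [Matrix.diagonal_mul_diagonal]
        have : (fun i => (ω i - α) * (ω i - α)⁻¹) = fun _ => (1 : ℝ) := by
          funext i; exact mul_inv_cancel₀ (hα i)
        rw [this, Matrix.diagonal_one]
      calc Q * Matrix.diagonal (fun i => ω i - α) * Qᵀ *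
            (Q * Matrix.diagonal (fun i => (ω i - α)⁻¹) * Qᵀ)
          = Q * (Matrix.diagonal (fun i => ω i - α) * ((Qᵀ * Q) *
              (Matrix.diagonal (fun i => (ω i - α)⁻¹) * Qᵀ))) := by
            simp only [Matrix.mul_assoc]
        _ = Q * ((Matrix.diagonal (fun i => ω i - α) *
              Matrix.diagonal (fun i => (ω i - α)⁻¹)) * Qᵀ) := by
            rw [hQ, Matrix.one_mul, Matrix.mul_assoc]
        _ = 1 := by rw [hDD, Matrix.one_mul, hQQ]
    rw [hg, hinv]
    set v : Fin n → ℝ := q + (α / 2) • (fun _ => 1 : Fin n → ℝ) with hv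
    have hQtv : Qᵀ *ᵥ v = fun i => qt i + (α / 2) * s i := by
      rw [hv, Matrix.mulVec_add, Matrix.mulVec_smul, ← hqt, ← hs]
      funext i
      simp [Pi.smul_apply]
    have : v ⬝ᵥ (Q * Matrix.diagonal (fun i => (ω i - α)⁻¹) * Qᵀ) *ᵥ v
        = (Qᵀ *ᵥ v) ⬝ᵥ (Matrix.diagonal (fun i => (ω i - α)⁻¹) *ᵥ (Qᵀ *ᵥ v)) := by
      rw [Matrix.mul_assoc, ← Matrix.mulVec_mulVec, ← Matrix.mulVec_mulVec,
        Matrix.dotProduct_mulVec, ← Matrix.mulVec_transpose]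
    rw [this, hQtv]
    congr 1
    simp only [Matrix.mulVec_diagonal, dotProduct]
    congr 1
    funext i
    field_simp
  have hg0 : g 0 = -∑ i, qt i ^ 2 / ω i := by
    rw [key 0 (fun i => by have := hω i; intro h; simp at h; linarith)]
    congr 1
    apply Finset.sum_congr rfl
    intro i _
    ring_nf
  have hgα : g αs = -∑ i, (qt i + (αs / 2) * s i) ^ 2 / (ω i - αs) :=
    key αs (fun i => (hwa i).ne')
  -- per-term algebraic identity
  have per : ∀ i, qt i ^ 2 / ω i - (qt i + (αs / 2) * s i) ^ 2 / (ω i - αs)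
      = (αs ^ 2 / ω i) * ((qt i + (1 / 2) * ω i * s i) / (ω i - αs)) ^ 2
        + αs * (s i ^ 2 / 4)
        - αs * ((qt i + (1 / 2) * ω i * s i) / (ω i - αs)) ^ 2 := by
    intro i
    have h1 : ω i ≠ 0 := (hω i).ne'
    have h2 : ω i - αs ≠ 0 := (hwa i).ne'
    field_simp
    ring
  have heq : g αs - g 0
      = ∑ i, (αs ^ 2 / ω i) * ((qt i + (1 / 2) * ω i * s i) / (ω i - αs)) ^ 2 := by
    rw [hgα, hg0]
    have : ∑ i, (qt i ^ 2 / ω i - (qt i + (αs / 2) * s i) ^ 2 / (ω i - αs))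
        = ∑ i, (αs ^ 2 / ω i) * ((qt i + (1 / 2) * ω i * s i) / (ω i - αs)) ^ 2 := by
      simp_rw [per]
      rw [Finset.sum_sub_distrib, Finset.sum_add_distrib, ← Finset.mul_sum,
        ← Finset.mul_sum, hfoc]
      have : ∑ i, s i ^ 2 / 4 = (n : ℝ) / 4 := by
        rw [← Finset.sum_div, hsum_s]
      rw [this]
      ring
    rw [← this, Finset.sum_sub_distrib]
    ring
  refine ⟨heq, ?_⟩
  obtain ⟨j, hj⟩ := hωmax.1
  have hωmax_pos : 0 < ωmax := hj ▸ hω j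
  calc (n : ℝ) * αs ^ 2 / (4 * ωmax)
      = ∑ i, (αs ^ 2 / ωmax) * ((qt i + (1 / 2) * ω i * s i) / (ω i - αs)) ^ 2 := by
        rw [← Finset.mul_sum, hfoc]; field_simp
    _ ≤ ∑ i, (αs ^ 2 / ω i) * ((qt i + (1 / 2) * ω i * s i) / (ω i - αs)) ^ 2 := by
        apply Finset.sum_le_sum
        intro i _
        apply mul_le_mul_of_nonneg_right _ (sq_nonneg _)
        exact div_le_div_of_nonneg_left (sq_nonneg αs) (hω i) (hωub i)
end

section
/- Let P = Q diag(ω) Qᵀ with Q an orthogonal n×n real matrix and ω ∈ ℝⁿ with all ωᵢ > 0; let ω_min = minᵢ ωᵢ and ω_max = maxᵢ ωᵢ, q ∈ ℝⁿ, s = Qᵀ𝟏, q̃ = Qᵀq, and for 0 ≤ α < ω_min define g(α) = −(q + (α/2)𝟏)ᵀ (P − αI)⁻¹ (q + (α/2)𝟏). If Σᵢ ((q̃ᵢ + (1/2)ωᵢ sᵢ)/(ωᵢ − α))² ≤ n/4 for all α ∈ [0, ω_min) (i.e., g'(α) ≥ 0 on this interval), then g(α) − g(0) ≥ n α² / (4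 ω_max) for every α ∈ [0, ω_min); consequently sup_{0 ≤ α < ω_min} (g(α) − g(0)) ≥ n ω_min² / (4 ω_max). -/
open Matrix

lemma stmt16_aux (n : ℕ) (Q : Matrix (Fin n) (Fin n) ℝ) (hQ : Qᵀ * Q = 1)
    (ω : Fin n → ℝ) (α : ℝ) (hα : ∀ i, ω i - α ≠ 0)
    (P : Matrix (Fin n) (Fin n) ℝ) (hP : P = Q * Matrix.diagonal ω * Qᵀ)
    (v : Fin n → ℝ) :
    v ⬝ᵥ ((P - α • (1 : Matrix (Fin n) (Fin n) ℝ))⁻¹ *ᵥ v)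
      = ∑ i, ((Qᵀ *ᵥ v) i)^2 / (ω i - α) := by
  have hQQt : Q * Qᵀ = 1 := by rwa [mul_eq_one_comm] at hQ
  have hfact : P - α • (1 : Matrix (Fin n) (Fin n) ℝ)
      = Q * Matrix.diagonal (fun i => ω i - α) * Qᵀ := by
    rw [hP]
    have : Matrix.diagonal (fun i => ω i - α) = Matrix.diagonal ω - α • (1 : Matrix (Fin n) (Fin n) ℝ) := by
      ext i j
      by_cases h : i = j <;> simp [Matrix.diagonal, Matrix.one_apply, h]
    rw [this, Matrix.mul_sub, Matrix.sub_mul]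
    congr 1
    rw [Matrix.mul_smul, Matrix.smul_mul, Matrix.mul_one, hQQt]
  have hinv : (P - α • (1 : Matrix (Fin n) (Fin n) ℝ))⁻¹
      = Q * Matrix.diagonal (fun i => (ω i - α)⁻¹) * Qᵀ := by
    apply Matrix.inv_eq_right_inv
    rw [hfact,
      show (Q * Matrix.diagonal (fun i => ω i - α) * Qᵀ) *
          (Q * Matrix.diagonal (fun i => (ω i - α)⁻¹) * Qᵀ)
        = Q * (Matrix.diagonal (fun i => ω i - α) *
          ((Qᵀ * Q) * Matrix.diagonal (fun i => (ω i - α)⁻¹))) * Qᵀ from by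
        simp only [Matrix.mul_assoc],
      hQ, Matrix.one_mul, Matrix.diagonal_mul_diagonal]
    have : (fun i => (ω i - α) * (ω i - α)⁻¹) = fun _ => (1:ℝ) := by
      funext i; exact mul_inv_cancel₀ (hα i)
    rw [this, Matrix.diagonal_one, Matrix.mul_one, hQQt]
  rw [hinv]
  rw [← Matrix.mulVec_mulVec, ← Matrix.mulVec_mulVec]
  rw [Matrix.dotProduct_mulVec v Q, ← Matrix.mulVec_transpose]
  simp only [Matrix.mulVec_diagonal, dotProduct]
  exact Finset.sum_congr rfl fun i _ => by ring

/-- If `g'(α) ≥ 0` on `[0, ω_min)` (i.e. `∑ᵢ ((q̃ᵢ + ωᵢsᵢ/2)/(ωᵢ - α))² ≤ n/4` there),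
then `g(α) - g(0) ≥ n α² / (4 ω_max)` on `[0, ω_min)`, and consequently
`sup_{0 ≤ α < ω_min} (g(α) - g(0)) ≥ n ω_min² / (4 ω_max)`. -/
theorem stmt_16 (n : ℕ) (Q : Matrix (Fin n) (Fin n) ℝ) (hQ : Qᵀ * Q = 1)
    (ω : Fin n → ℝ) (hω : ∀ i, 0 < ω i)
    (P : Matrix (Fin n) (Fin n) ℝ) (hP : P = Q * Matrix.diagonal ω * Qᵀ)
    (ωmin ωmax : ℝ) (hωmin : IsLeast (Set.range ω) ωmin)
    (hωmax : IsGreatest (Set.range ω) ωmax)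
    (q s qt : Fin n → ℝ)
    (hs : s = Qᵀ *ᵥ (fun _ => 1)) (hqt : qt = Qᵀ *ᵥ q)
    (g : ℝ → ℝ)
    (hg : ∀ α, g α = -((q + (α / 2) • (fun _ => 1 : Fin n → ℝ)) ⬝ᵥ
      ((P - α • (1 : Matrix (Fin n) (Fin n) ℝ))⁻¹ *ᵥ
        (q + (α / 2) • (fun _ => 1 : Fin n → ℝ)))))
    (hder : ∀ α : ℝ, 0 ≤ α → α < ωmin →
      ∑ i, ((qt i + (1 / 2) * ω i * s i) / (ω i - α)) ^ 2 ≤ (n : ℝ) / 4) :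
    (∀ α : ℝ, 0 ≤ α → α < ωmin →
        (n : ℝ) * α ^ 2 / (4 * ωmax) ≤ g α - g 0) ∧
      (n : ℝ) * ωmin ^ 2 / (4 * ωmax) ≤
        sSup {r : ℝ | ∃ α : ℝ, 0 ≤ α ∧ α < ωmin ∧ r = g α - g 0} := by
  obtain ⟨hmem, hmin⟩ := hωmin
  obtain ⟨hmemx, hmax⟩ := hωmax
  obtain ⟨i0, hi0⟩ := hmem
  obtain ⟨imax, himax⟩ := hmemx
  have hQQt : Q * Qᵀ = 1 := by rwa [mul_eq_one_comm] at hQ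
  have hωminpos : 0 < ωmin := hi0 ▸ hω i0
  have hωmaxpos : 0 < ωmax := himax ▸ hω imax
  have hle : ∀ i, ω i ≤ ωmax := fun i => hmax ⟨i, rfl⟩
  have hge : ∀ i, ωmin ≤ ω i := fun i => hmin ⟨i, rfl⟩
  have hminmax : ωmin ≤ ωmax := hmax ⟨i0, hi0⟩
  -- ∑ s i ^ 2 = n
  have hssq : ∑ i, s i ^ 2 = (n : ℝ) := by
    have : ∑ i, s i ^ 2 = s ⬝ᵥ s := by
      simp [dotProduct, sq]
    rw [this, hs, Matrix.dotProduct_mulVec, ← Matrix.mulVec_transpose,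
      Matrix.mulVec_mulVec, Matrix.transpose_transpose, hQQt, Matrix.one_mulVec]
    simp [dotProduct]
  -- diagonalized formula for g
  have hgf : ∀ α : ℝ, α < ωmin →
      g α = -∑ i, (qt i + α / 2 * s i) ^ 2 / (ω i - α) := by
    intro α hα
    have hne : ∀ i, ω i - α ≠ 0 := fun i => by
      have := lt_of_lt_of_le hα (hge i); linarith
    rw [hg, stmt16_aux n Q hQ ω α hne P hP]
    congr 1
    refine Finset.sum_congr rfl fun i _ => ?_
    congr 1
    rw [Matrix.mulVec_add, Matrix.mulVec_smul, hqt, hs]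
    simp [smul_eq_mul]
  -- the key identity: g α - g 0 = α * (n/4 - T α)
  have hkey : ∀ α : ℝ, 0 ≤ α → α < ωmin →
      g α - g 0 = α * ((n : ℝ)/4 -
        ∑ i, (qt i + (1/2) * ω i * s i)^2 / (ω i * (ω i - α))) := by
    intro α hα0 hα
    rw [hgf α hα, hgf 0 hωminpos]
    have : ∀ i : Fin n,
        (qt i + 0 / 2 * s i) ^ 2 / (ω i - 0) - (qt i + α / 2 * s i) ^ 2 / (ω i - α)
        = α * (s i ^ 2 / 4 - (qt i + (1/2) * ω i * s i)^2 / (ω i * (ω i - α))) := by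
      intro i
      have h1 : ω i ≠ 0 := ne_of_gt (hω i)
      have h2 : ω i - α ≠ 0 := by
        have := lt_of_lt_of_le hα (hge i); linarith
      field_simp
      ring
    have hsum : -∑ i, (qt i + α / 2 * s i) ^ 2 / (ω i - α)
        - -∑ i, (qt i + 0 / 2 * s i) ^ 2 / (ω i - 0)
        = ∑ i, ((qt i + 0 / 2 * s i) ^ 2 / (ω i - 0)
            - (qt i + α / 2 * s i) ^ 2 / (ω i - α)) := by
      rw [Finset.sum_sub_distrib]; ring
    rw [hsum]
    rw [Finset.sum_congr rfl fun i _ => this i]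
    rw [← Finset.mul_sum, Finset.sum_sub_distrib, ← Finset.sum_div, hssq]
  -- pointwise bound
  have hpt : ∀ α : ℝ, 0 ≤ α → α < ωmin →
      (n : ℝ) * α ^ 2 / (4 * ωmax) ≤ g α - g 0 := by
    intro α hα0 hα
    rw [hkey α hα0 hα]
    have hT : ∑ i, (qt i + (1/2) * ω i * s i)^2 / (ω i * (ω i - α))
        ≤ (1 - α / ωmax) * ((n : ℝ)/4) := by
      calc ∑ i, (qt i + (1/2) * ω i * s i)^2 / (ω i * (ω i - α))
          ≤ ∑ i, (1 - α / ωmax) * ((qt i + (1/2) * ω i * s i) / (ω i - α))^2 := by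
            refine Finset.sum_le_sum fun i _ => ?_
            have hωi : (0:ℝ) < ω i := hω i
            have hia : (0:ℝ) < ω i - α := by
              have := lt_of_lt_of_le hα (hge i); linarith
            have e : (qt i + (1/2) * ω i * s i)^2 / (ω i * (ω i - α))
                = (1 - α / ω i) * ((qt i + (1/2) * ω i * s i) / (ω i - α))^2 := by
              field_simp
            rw [e]
            apply mul_le_mul_of_nonneg_right _ (sq_nonneg _)
            have : α / ωmax ≤ α / ω i :=
              div_le_div_of_nonneg_left hα0 hωi (hle i)
            linarith
        _ = (1 - α / ωmax) * ∑ i, ((qt i + (1/2) * ω i * s i) / (ω i - α))^2 := by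
            rw [Finset.mul_sum]
        _ ≤ (1 - α / ωmax) * ((n : ℝ)/4) := by
            apply mul_le_mul_of_nonneg_left (hder α hα0 hα)
            have : α / ωmax ≤ 1 := by
              rw [div_le_one hωmaxpos]; linarith
            linarith
    have h2 : α * (α / ωmax * ((n:ℝ)/4)) ≤ α * ((n : ℝ)/4 -
        ∑ i, (qt i + (1/2) * ω i * s i)^2 / (ω i * (ω i - α))) := by
      apply mul_le_mul_of_nonneg_left _ hα0
      have : (1 - α / ωmax) * ((n : ℝ)/4) = (n:ℝ)/4 - α / ωmax * ((n:ℝ)/4) := by ring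
      linarith [hT, this]
    refine le_trans (le_of_eq ?_) h2
    field_simp
  refine ⟨hpt, ?_⟩
  -- the sup part
  set S := {r : ℝ | ∃ α : ℝ, 0 ≤ α ∧ α < ωmin ∧ r = g α - g 0} with hS
  have hne : S.Nonempty := ⟨g 0 - g 0, 0, le_refl 0, hωminpos, rfl⟩
  have hbdd : BddAbove S := by
    refine ⟨ωmin * ((n:ℝ)/4), ?_⟩
    rintro r ⟨α, hα0, hα, rfl⟩
    rw [hkey α hα0 hα]
    have hTnn : 0 ≤ ∑ i, (qt i + (1/2) * ω i * s i)^2 / (ω i * (ω i - α)) := by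
      refine Finset.sum_nonneg fun i _ => ?_
      have hia : (0:ℝ) < ω i - α := by
        have := lt_of_lt_of_le hα (hge i); linarith
      exact div_nonneg (sq_nonneg _) (le_of_lt (mul_pos (hω i) hia))
    calc α * ((n : ℝ)/4 - ∑ i, (qt i + (1/2) * ω i * s i)^2 / (ω i * (ω i - α)))
        ≤ α * ((n:ℝ)/4) := by
          apply mul_le_mul_of_nonneg_left _ hα0; linarith
      _ ≤ ωmin * ((n:ℝ)/4) := by
          apply mul_le_mul_of_nonneg_right (le_of_lt hα)
          have : (0:ℝ) ≤ (n:ℝ) := Nat.cast_nonneg n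
          linarith
  have hcont : Filter.Tendsto (fun α : ℝ => (n : ℝ) * α ^ 2 / (4 * ωmax))
      (nhdsWithin ωmin (Set.Iio ωmin)) (nhds ((n : ℝ) * ωmin ^ 2 / (4 * ωmax))) := by
    apply Filter.Tendsto.mono_left _ nhdsWithin_le_nhds
    exact (Continuous.tendsto ((continuous_const.mul (continuous_pow 2)).div_const _) ωmin)
  refine le_of_tendsto hcont ?_
  filter_upwards [Ioo_mem_nhdsLT_of_mem (Set.mem_Ioc.mpr ⟨hωminpos, le_refl _⟩)] with α hα
  obtain ⟨hα0, hα1⟩ := hα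
  exact le_trans (hpt α hα0.le hα1) (le_csSup hbdd ⟨α, hα0.le, hα1, rfl⟩)
end

section
/- Let P be a symmetric n×n real matrix with strictly positive diagonal entries, q ∈ ℝⁿ, and f(x) = xᵀPx + 2qᵀx. For x ∈ ℤⁿ let g = 2(Px + q). Then x is 1-opt — i.e., f(x + c·eᵢ) ≥ f(x) for every coordinate index i and every integer c — if and only if Pᵢᵢ ≥ |gᵢ| for every i, where eᵢ denotes the i-th standard basis vector. -/
open Matrix

/-- An integer point `x` is 1-opt (no single-coordinate integer change improves `f`)
if and only if `Pᵢᵢ ≥ |gᵢ|` for all `i`, where `g = 2(Px + q)`. -/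
theorem stmt_17 (n : ℕ) (P : Matrix (Fin n) (Fin n) ℝ) (hP : P.IsSymm)
    (hPd : ∀ i, 0 < P i i) (q : Fin n → ℝ)
    (f : (Fin n → ℝ) → ℝ)
    (hf : ∀ y, f y = y ⬝ᵥ (P *ᵥ y) + 2 * (q ⬝ᵥ y))
    (x : Fin n → ℤ) (xr g : Fin n → ℝ)
    (hxr : xr = fun i => (x i : ℝ)) (hg : g = (2 : ℝ) • (P *ᵥ xr + q)) :
    (∀ (i : Fin n) (c : ℤ), f xr ≤ f (xr + (c : ℝ) • (Pi.single i 1 : Fin n → ℝ))) ↔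
      ∀ i, |g i| ≤ P i i := by
  have key : ∀ (i : Fin n) (c : ℝ),
      f (xr + c • (Pi.single i 1 : Fin n → ℝ)) - f xr
        = c ^ 2 * P i i + c * g i := by
    intro i c
    rw [hf, hf, hg]
    simp only [mulVec_add, mulVec_smul, dotProduct_add, add_dotProduct,
      smul_dotProduct, dotProduct_smul, smul_eq_mul, Pi.smul_apply, Pi.add_apply,
      mulVec_single, single_dotProduct, dotProduct_single]
    have h4 : (xr ⬝ᵥ P.col i) = (P *ᵥ xr) i := by
      simp only [mul_one, dotProduct, mulVec, Matrix.col_apply]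
      refine Finset.sum_congr rfl fun j _ => ?_
      rw [hP.apply i j]; ring
    rw [h4]
    simp only [MulOpposite.op_one, one_smul, Matrix.col_apply]
    ring
  constructor
  · intro h i
    have hc1 := h i 1
    have hc2 := h i (-1)
    have k1 := key i 1
    have k2 := key i (-1)
    rw [abs_le]
    push_cast at hc1 hc2
    constructor <;> nlinarith [k1, k2, hc1, hc2]
  · intro h i c
    have k := key i (c : ℝ)
    have hb := h i
    rcases eq_or_ne c 0 with rfl | hc
    · simp
    · have h1 : (1 : ℝ) ≤ |(c : ℝ)| := by
        rw [← Int.cast_abs]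
        exact_mod_cast Int.one_le_abs hc
      have h2 : -(|(c : ℝ)| * |g i|) ≤ (c : ℝ) * g i := by
        rw [← abs_mul]; exact neg_abs_le _
      have t1 : 0 ≤ (|(c : ℝ)| - 1) * |(c : ℝ)| * P i i :=
        mul_nonneg (mul_nonneg (by linarith) (abs_nonneg _)) (hPd i).le
      have t2 : 0 ≤ |(c : ℝ)| * (P i i - |g i|) :=
        mul_nonneg (abs_nonneg _) (by linarith)
      have t3 : ((c : ℝ)) ^ 2 * P i i = |(c : ℝ)| ^ 2 * P i i := by
        rw [sq_abs]
      linarith [k, h2, t1, t2, t3]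
end

section
/- Let P be a symmetric n×n real matrix, q ∈ ℝⁿ, and f(x) = xᵀPx + 2qᵀx. Suppose α ≥ 0 and γ ∈ ℝ are such that the (n+1)×(n+1) block matrix [[P − αI, q + (α/2)𝟏], [(q + (α/2)𝟏)ᵀ, γ]] is positive semidefinite. Then f(x) ≥ −γ for every x ∈ ℝⁿ satisfying ‖x − (1/2)𝟏‖₂² ≥ n/4. In particular, since every x ∈ ℤⁿ satisfies ‖x − (1/2)𝟏‖₂² ≥ n/4, f(x) ≥ −γ for every x ∈ ℤⁿ. -/
open Matrix

/-- S-procedure certificate: if `α ≥ 0` and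
`[[P - αI, q + (α/2)𝟏], [(q + (α/2)𝟏)ᵀ, γ]] ⪰ 0`, then `f(x) ≥ -γ` for every real `x`
outside the sphere `‖x - 𝟏/2‖² ≥ n/4`; in particular every integer point lies outside
this sphere, so `f(x) ≥ -γ` on `ℤⁿ`. -/
theorem stmt_19 (n : ℕ) (P : Matrix (Fin n) (Fin n) ℝ) (hP : P.IsSymm)
    (q : Fin n → ℝ) (α γ : ℝ) (hα : 0 ≤ α)
    (hpsd : (Matrix.fromBlocks (P - α • (1 : Matrix (Fin n) (Fin n) ℝ))
        (Matrix.of fun i (_ : Unit) => (q + (α / 2) • (fun _ => 1 : Fin n → ℝ)) i)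
        (Matrix.of fun (_ : Unit) j => (q + (α / 2) • (fun _ => 1 : Fin n → ℝ)) j)
        (Matrix.of fun (_ : Unit) (_ : Unit) => γ)).PosSemidef) :
    (∀ x : Fin n → ℝ, (n : ℝ) / 4 ≤ ∑ i, (x i - 1 / 2) ^ 2 →
        -γ ≤ x ⬝ᵥ (P *ᵥ x) + 2 * (q ⬝ᵥ x)) ∧
      (∀ x : Fin n → ℤ,
        (n : ℝ) / 4 ≤ ∑ i, ((x i : ℝ) - 1 / 2) ^ 2 ∧
          -γ ≤ (fun i => (x i : ℝ)) ⬝ᵥ (P *ᵥ fun i => (x i : ℝ))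
              + 2 * (q ⬝ᵥ fun i => (x i : ℝ))) := by
  have key : ∀ x : Fin n → ℝ, (n : ℝ) / 4 ≤ ∑ i, (x i - 1 / 2) ^ 2 →
      -γ ≤ x ⬝ᵥ (P *ᵥ x) + 2 * (q ⬝ᵥ x) := by
    intro x hx
    have h := hpsd.dotProduct_mulVec_nonneg (Sum.elim x (fun _ => 1))
    simp only [Matrix.fromBlocks_mulVec, Matrix.sub_mulVec, Matrix.smul_mulVec,
      Matrix.one_mulVec, dotProduct, Fintype.sum_sum_type, Sum.elim_inl, Sum.elim_inr,
      Matrix.mulVec, Matrix.of_apply, Pi.add_apply, Pi.sub_apply, Pi.smul_apply,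
      smul_eq_mul, Finset.sum_const, Finset.card_univ, one_smul,
      mul_one, one_mul, Fintype.card_unit, Matrix.fromBlocks_apply₁₁, Matrix.fromBlocks_apply₁₂,
      Matrix.fromBlocks_apply₂₁, Matrix.fromBlocks_apply₂₂, star_trivial] at h
    have e2 : ∀ i, (∑ j, (P - α • (1 : Matrix (Fin n) (Fin n) ℝ)) i j * x j)
        = (∑ j, P i j * x j) - α * x i := by
      intro i
      simp only [Matrix.sub_apply, Matrix.smul_apply, Matrix.one_apply, smul_eq_mul,
        sub_mul, mul_ite, mul_one, mul_zero, ite_mul, zero_mul, Finset.sum_sub_distrib,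
        Finset.sum_ite_eq, Finset.mem_univ, if_true]
    simp_rw [e2] at h
    have ha : ∑ i, x i * ((∑ j, P i j * x j) - α * x i + (q i + α / 2)) =
        (∑ i, x i * ∑ j, P i j * x j) - α * (∑ i, x i ^ 2) + (∑ i, q i * x i)
          + (α / 2) * (∑ i, x i) :=
      calc ∑ i, x i * ((∑ j, P i j * x j) - α * x i + (q i + α / 2))
          = ∑ i, (x i * (∑ j, P i j * x j) - α * x i ^ 2 + (q i * x i + (α / 2) * x i)) :=
            Finset.sum_congr rfl fun i _ => by ring
        _ = _ := by
            rw [Finset.sum_add_distrib, Finset.sum_sub_distrib, Finset.sum_add_distrib,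
              ← Finset.mul_sum, ← Finset.mul_sum]
            ring
    have hb : ∑ i, (q i + α / 2) * x i = (∑ i, q i * x i) + (α / 2) * (∑ i, x i) := by
      simp_rw [add_mul]
      rw [Finset.sum_add_distrib, ← Finset.mul_sum]
    rw [ha, hb] at h
    have e1 : ∑ i, (x i - 1 / 2) ^ 2 = (∑ i, x i ^ 2) - (∑ i, x i) + (n : ℝ) / 4 :=
      calc ∑ i, (x i - 1 / 2) ^ 2 = ∑ i, (x i ^ 2 - x i + 1 / 4) :=
            Finset.sum_congr rfl fun i _ => by ring
        _ = _ := by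
            rw [Finset.sum_add_distrib, Finset.sum_sub_distrib, Finset.sum_const,
              Finset.card_univ, Fintype.card_fin, nsmul_eq_mul]
            ring
    have h0 : 0 ≤ (∑ i, x i ^ 2) - (∑ i, x i) := by rw [e1] at hx; linarith
    simp only [dotProduct, mulVec] at *
    nlinarith [mul_nonneg hα h0, h]
  refine ⟨key, fun x => ?_⟩
  have hint : (n : ℝ) / 4 ≤ ∑ i, ((x i : ℝ) - 1 / 2) ^ 2 := by
    have h1 : ∀ i ∈ Finset.univ, (1 : ℝ) / 4 ≤ ((x i : ℝ) - 1 / 2) ^ 2 := by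
      intro i _
      have h2 : (0 : ℤ) ≤ x i * (x i - 1) := by
        rcases le_or_gt 1 (x i) with h | h
        · exact mul_nonneg (by omega) (by omega)
        · nlinarith [h]
      have h3 : (0 : ℝ) ≤ (x i : ℝ) * ((x i : ℝ) - 1) := by exact_mod_cast h2
      nlinarith
    calc (n : ℝ) / 4 = ∑ _i : Fin n, (1 : ℝ) / 4 := by
          simp [Finset.sum_const, Finset.card_univ]; ring
      _ ≤ _ := Finset.sum_le_sum h1
  exact ⟨hint, key _ hint⟩
end
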